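/- arXiv:2403.13125 — 3 statements merged into one kernel-verified Lean document; each statement's English description precedes it below -/
import Mathlib

section
/- Let Z and X be finite types, let π be a pmf on Z with π z > 0 for all z, and for each z : Z let p_z and q_z be pmfs on X with q_z x > 0 for all x. Define the mixture pmfs p and q on X by p x = ∑ z, π z * p_z x and q x = ∑ z, π z * q_z x. Then H(p, q) ≤ ∑ z, π z * H(p_z, q_z) + H(π), where H(π) = -∑ z, π z * Real.log (π z) is the entropy of the mixing weights. -/
/-- For mixtures p x = ∑ z, π z * p_z x and q x = ∑ z, π z * q_z x,
H(p, q) ≤ ∑ z, π z * H(p_z, q_z) + H(π). -/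
theorem cross_entropy_mixture_bound
    {Z X : Type*} [Fintype Z] [Fintype X]
    (π : Z → ℝ) (hπpos : ∀ z, 0 < π z) (hπsum : ∑ z, π z = 1)
    (p q : Z → X → ℝ)
    (hp0 : ∀ z x, 0 ≤ p z x) (hp1 : ∀ z, ∑ x, p z x = 1)
    (hq0 : ∀ z x, 0 < q z x) (hq1 : ∀ z, ∑ x, q z x = 1) :
    -∑ x, (∑ z, π z * p z x) * Real.log (∑ z, π z * q z x) ≤
      ∑ z, π z * (-∑ x, p z x * Real.log (q z x)) +
        (-∑ z, π z * Real.log (π z)) := by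
  have hZ : (Finset.univ : Finset Z).Nonempty := by
    by_contra h
    rw [Finset.not_nonempty_iff_eq_empty] at h
    simp [h] at hπsum
  set Q : X → ℝ := fun x => ∑ z, π z * q z x with hQ
  have hQpos : ∀ x, 0 < Q x := fun x =>
    Finset.sum_pos (fun z _ => mul_pos (hπpos z) (hq0 z x)) hZ
  have key : ∀ z x, π z * p z x * (-Real.log (Q x)) ≤
      π z * p z x * (-(Real.log (π z) + Real.log (q z x))) := by
    intro z x
    apply mul_le_mul_of_nonneg_left _ (mul_nonneg (hπpos z).le (hp0 z x))
    rw [neg_le_neg_iff, ← Real.log_mul (hπpos z).ne' (hq0 z x).ne']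
    apply Real.log_le_log (mul_pos (hπpos z) (hq0 z x))
    exact Finset.single_le_sum (fun w _ => (mul_pos (hπpos w) (hq0 w x)).le)
      (Finset.mem_univ z)
  calc -∑ x, (∑ z, π z * p z x) * Real.log (Q x)
      = ∑ x, ∑ z, π z * p z x * (-Real.log (Q x)) := by
        rw [← Finset.sum_neg_distrib]
        refine Finset.sum_congr rfl fun x _ => ?_
        rw [Finset.sum_mul]
        simp [mul_neg, Finset.sum_neg_distrib]
    _ ≤ ∑ x, ∑ z, π z * p z x * (-(Real.log (π z) + Real.log (q z x))) := by
        exact Finset.sum_le_sum fun x _ => Finset.sum_le_sum fun z _ => key z x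
    _ = ∑ z, π z * (-∑ x, p z x * Real.log (q z x)) + (-∑ z, π z * Real.log (π z)) := by
        rw [Finset.sum_comm, ← Finset.sum_neg_distrib, ← Finset.sum_add_distrib]
        refine Finset.sum_congr rfl fun z _ => ?_
        have h1 : ∑ x, π z * p z x * (-(Real.log (π z) + Real.log (q z x)))
            = ∑ x, (π z * (-(p z x * Real.log (q z x)))
              + (-Real.log (π z) * π z) * p z x) :=
          Finset.sum_congr rfl fun x _ => by ring
        rw [h1, Finset.sum_add_distrib, ← Finset.mul_sum, ← Finset.mul_sum,
          Finset.sum_neg_distrib, hp1 z]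
        ring
end

section
/- Let Z (latent states), ι (buckets), and X' (unconstrained variables) be finite types, and for each B : ι let X B be a finite type. Given a pmf w on Z, for each z : Z a pmf p' z on X', and for each z : Z and B : ι pmfs pB z B and qB z B on X B, define p and q on X' × (Π B : ι, X B) by p (x', x) = ∑ z, w z * p' z x' * ∏ B, pB z B (x B) and q (x', x) = ∑ z, w z * p' z x' * ∏ B, qB z B (x B); these are pmfs. Assume w z > 0 for all z, p' z x' > 0 for all z and x', and qB z B y > 0 for all z, B, y. Then H(p, q) ≤ ∑ B, ∑ z, w z * H(pB z B, qB z B) + H(r), where r is the pmf on Z × X' defined by r (z, x') = w z * p' z x'. -/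
open Finset

lemma sum_prod_pi {ι : Type*} [Fintype ι] [DecidableEq ι] {X : ι → Type*}
    [∀ i, Fintype (X i)] (f : ∀ i, X i → ℝ) :
    ∑ x : ∀ i, X i, ∏ i, f i (x i) = ∏ i, ∑ y, f i y := by
  rw [Finset.prod_univ_sum, Fintype.piFinset_univ]

lemma sum_prod_mul {ι : Type*} [Fintype ι] [DecidableEq ι] {X : ι → Type*}
    [∀ i, Fintype (X i)] (f : ∀ i, X i → ℝ) (hf : ∀ i, ∑ y, f i y = 1)
    (B : ι) (g : X B → ℝ) :
    ∑ x : ∀ i, X i, (∏ i, f i (x i)) * g (x B) = ∑ y, f B y * g y := by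
  set F := Function.update f B (fun y => f B y * g y) with hF
  have h1 : ∀ (x : ∀ i, X i),
      (∏ i, f i (x i)) * g (x B) = ∏ i, F i (x i) := by
    intro x
    rw [← Finset.mul_prod_erase univ (fun i => F i (x i)) (mem_univ B),
        ← Finset.mul_prod_erase univ (fun i => f i (x i)) (mem_univ B)]
    have h2 : ∏ i ∈ univ.erase B, F i (x i) = ∏ i ∈ univ.erase B, f i (x i) :=
      Finset.prod_congr rfl fun i hi => by
        rw [hF, Function.update_of_ne (Finset.ne_of_mem_erase hi)]
    rw [h2, hF]
    simp only [Function.update_self]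
    ring
  rw [Finset.sum_congr rfl fun x _ => h1 x, sum_prod_pi]
  rw [← Finset.mul_prod_erase univ (fun i => ∑ y, F i y) (mem_univ B)]
  have h3 : ∏ i ∈ univ.erase B, ∑ y, F i y = 1 := by
    rw [Finset.prod_congr rfl fun i hi => by
      rw [hF, Function.update_of_ne (Finset.ne_of_mem_erase hi)] ]
    simp [hf]
  rw [h3, hF]
  simp only [Function.update_self, mul_one]

lemma E_aux {ι X' : Type*} [Fintype ι] [Fintype X'] [DecidableEq ι] {X : ι → Type*}
    [∀ B, Fintype (X B)]
    (c : ℝ) (hc : 0 < c) (p' : X' → ℝ) (hp'0 : ∀ x', 0 < p' x') (hp'1 : ∑ x', p' x' = 1)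
    (pB qB : ∀ B, X B → ℝ) (hpB1 : ∀ B, ∑ y, pB B y = 1) (hqB0 : ∀ B y, 0 < qB B y) :
    ∑ x' : X', ∑ x : ∀ B, X B,
        (c * p' x' * ∏ B, pB B (x B)) * (-Real.log (c * p' x' * ∏ B, qB B (x B)))
      = ∑ B, c * (-∑ y, pB B y * Real.log (qB B y))
        + ∑ x', (c * p' x') * (-Real.log (c * p' x')) := by
  have hP : ∑ x : ∀ B, X B, ∏ B, pB B (x B) = 1 := by
    rw [sum_prod_pi]; simp [hpB1]
  have hinner : ∀ x' : X',
      ∑ x : ∀ B, X B,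
        (c * p' x' * ∏ B, pB B (x B)) * (-Real.log (c * p' x' * ∏ B, qB B (x B)))
      = (c * p' x') * (-Real.log (c * p' x'))
        + (c * p' x') * ∑ B, (-∑ y, pB B y * Real.log (qB B y)) := by
    intro x'
    have hlog : ∀ x : ∀ B, X B,
        Real.log (c * p' x' * ∏ B, qB B (x B))
          = Real.log (c * p' x') + ∑ B, Real.log (qB B (x B)) := by
      intro x
      rw [Real.log_mul (ne_of_gt (mul_pos hc (hp'0 x')))
          (ne_of_gt (Finset.prod_pos fun B _ => hqB0 B (x B))),
        Real.log_prod fun B _ => ne_of_gt (hqB0 B (x B))]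
    have hterm : ∀ x : ∀ B, X B,
        (c * p' x' * ∏ B, pB B (x B)) * (-Real.log (c * p' x' * ∏ B, qB B (x B)))
          = (c * p' x' * (-Real.log (c * p' x'))) * ∏ B, pB B (x B)
            + c * p' x' * ∑ B, (∏ B', pB B' (x B')) * (-Real.log (qB B (x B))) := by
      intro x
      rw [hlog x]
      rw [show (∑ B, (∏ B', pB B' (x B')) * (-Real.log (qB B (x B))))
            = (∏ B', pB B' (x B')) * (-∑ B, Real.log (qB B (x B))) by
          rw [← Finset.sum_neg_distrib, Finset.mul_sum]]
      ring
    rw [Finset.sum_congr rfl fun x _ => hterm x, Finset.sum_add_distrib,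
      ← Finset.mul_sum, hP, mul_one]
    congr 1
    rw [← Finset.mul_sum, Finset.sum_comm]
    congr 1
    refine Finset.sum_congr rfl fun B _ => ?_
    rw [sum_prod_mul pB hpB1 B (fun y => -Real.log (qB B y))]
    simp [mul_neg, Finset.sum_neg_distrib]
  rw [Finset.sum_congr rfl fun x' _ => hinner x', Finset.sum_add_distrib, add_comm]
  congr 1
  rw [← Finset.sum_mul, show (∑ x', c * p' x') = c by rw [← Finset.mul_sum, hp'1, mul_one],
    Finset.mul_sum]



/-- Theorem 1 of the paper: for a PC written as a mixture over
latent states z of products of per-bucket distributions and a factor over the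
remaining variables X', with q differing from p only in the per-bucket
components, H(p, q) ≤ ∑ B, ∑ z, w z * H(pB z B, qB z B) + H(r),
where r (z, x') = w z * p' z x'. -/
theorem pc_cross_entropy_bound
    {Z ι X' : Type*} [Fintype Z] [Fintype ι] [Fintype X'] [DecidableEq ι]
    (X : ι → Type*) [∀ B, Fintype (X B)]
    (w : Z → ℝ) (hw0 : ∀ z, 0 < w z) (hw1 : ∑ z, w z = 1)
    (p' : Z → X' → ℝ) (hp'0 : ∀ z x', 0 < p' z x') (hp'1 : ∀ z, ∑ x', p' z x' = 1)
    (pB qB : Z → ∀ B, X B → ℝ)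
    (hpB0 : ∀ z B y, 0 ≤ pB z B y) (hpB1 : ∀ z B, ∑ y, pB z B y = 1)
    (hqB0 : ∀ z B y, 0 < qB z B y) (hqB1 : ∀ z B, ∑ y, qB z B y = 1) :
    -∑ x' : X', ∑ x : (∀ B, X B),
        (∑ z, w z * p' z x' * ∏ B, pB z B (x B)) *
          Real.log (∑ z, w z * p' z x' * ∏ B, qB z B (x B)) ≤
      ∑ B, ∑ z, w z * (-∑ y, pB z B y * Real.log (qB z B y)) +
        (-∑ z, ∑ x', (w z * p' z x') * Real.log (w z * p' z x')) := by
  have ha0 : ∀ z x' (x : ∀ B, X B), 0 ≤ w z * p' z x' * ∏ B, pB z B (x B) := fun z x' x =>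
    mul_nonneg (mul_nonneg (hw0 z).le (hp'0 z x').le)
      (Finset.prod_nonneg fun B _ => hpB0 z B (x B))
  have hb0 : ∀ z x' (x : ∀ B, X B), 0 < w z * p' z x' * ∏ B, qB z B (x B) := fun z x' x =>
    mul_pos (mul_pos (hw0 z) (hp'0 z x')) (Finset.prod_pos fun B _ => hqB0 z B (x B))
  have key : ∀ (x' : X') (x : ∀ B, X B),
      -((∑ z, w z * p' z x' * ∏ B, pB z B (x B)) *
          Real.log (∑ z, w z * p' z x' * ∏ B, qB z B (x B))) ≤
      ∑ z, (w z * p' z x' * ∏ B, pB z B (x B)) *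
          (-Real.log (w z * p' z x' * ∏ B, qB z B (x B))) := by
    intro x' x
    calc -((∑ z, w z * p' z x' * ∏ B, pB z B (x B)) *
          Real.log (∑ z, w z * p' z x' * ∏ B, qB z B (x B)))
        = ∑ z, (w z * p' z x' * ∏ B, pB z B (x B)) *
            (-Real.log (∑ z, w z * p' z x' * ∏ B, qB z B (x B))) := by
          rw [← Finset.sum_mul, mul_neg]
      _ ≤ ∑ z, (w z * p' z x' * ∏ B, pB z B (x B)) *
            (-Real.log (w z * p' z x' * ∏ B, qB z B (x B))) :=
          Finset.sum_le_sum fun z _ =>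
            mul_le_mul_of_nonneg_left
              (neg_le_neg (Real.log_le_log (hb0 z x' x)
                (Finset.single_le_sum (fun i _ => (hb0 i x' x).le) (mem_univ z))))
              (ha0 z x' x)
  calc -∑ x' : X', ∑ x : (∀ B, X B),
        (∑ z, w z * p' z x' * ∏ B, pB z B (x B)) *
          Real.log (∑ z, w z * p' z x' * ∏ B, qB z B (x B))
      = ∑ x' : X', ∑ x : (∀ B, X B),
          -((∑ z, w z * p' z x' * ∏ B, pB z B (x B)) *
            Real.log (∑ z, w z * p' z x' * ∏ B, qB z B (x B))) := by
        simp [Finset.sum_neg_distrib]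
    _ ≤ ∑ x' : X', ∑ x : (∀ B, X B), ∑ z,
          (w z * p' z x' * ∏ B, pB z B (x B)) *
            (-Real.log (w z * p' z x' * ∏ B, qB z B (x B))) :=
        Finset.sum_le_sum fun x' _ => Finset.sum_le_sum fun x _ => key x' x
    _ = ∑ z, ∑ x' : X', ∑ x : (∀ B, X B),
          (w z * p' z x' * ∏ B, pB z B (x B)) *
            (-Real.log (w z * p' z x' * ∏ B, qB z B (x B))) := by
        rw [Finset.sum_congr rfl fun x' (_ : x' ∈ univ) => Finset.sum_comm, Finset.sum_comm]
    _ = ∑ z, (∑ B, w z * (-∑ y, pB z B y * Real.log (qB z B y))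
          + ∑ x', (w z * p' z x') * (-Real.log (w z * p' z x'))) :=
        Finset.sum_congr rfl fun z _ =>
          E_aux (w z) (hw0 z) (p' z) (hp'0 z) (hp'1 z) (pB z) (qB z) (hpB1 z) (hqB0 z)
    _ = ∑ B, ∑ z, w z * (-∑ y, pB z B y * Real.log (qB z B y)) +
        (-∑ z, ∑ x', (w z * p' z x') * Real.log (w z * p' z x')) := by
        rw [Finset.sum_add_distrib, Finset.sum_comm]
        congr 1
        simp [mul_neg, Finset.sum_neg_distrib]
end

section
/- Let Z (latent states), ι (buckets), and X' (unconstrained variables) be finite types, and for each B : ι let X B be a finite type. Given a pmf w on Z, for each z : Z a pmf p' z on X', and for each z : Z and B : ι pmfs pB z B and qB z B on X B, define pmfs p and q on X' × (Π B : ι, X B) by p (x', x) = ∑ z, w z * p' z x' * ∏ B, pB z B (x B) and q (x', x) = ∑ z, w z * p' z x' * ∏ B, qB z B (x B). Assume w z > 0 for all z, p' z x' > 0 for all z and x', pB z B y > 0 for all z, B, y, and qB z B y > 0 for all z, B, y. Then KL(p ‖ q) ≤ ∑ B, ∑ z, w z * H(pB z B, qB z B) + H(r) - H(p), where r is the pmf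 on Z × X' defined by r (z, x') = w z * p' z x'. -/
open Finset in
/-- Sum over a product space of a product with one marked factor. -/
lemma aux_sum_pi_prod_mul {ι : Type*} [Fintype ι] [DecidableEq ι] (X : ι → Type*)
    [∀ B, Fintype (X B)] (f : ∀ B, X B → ℝ) (h1 : ∀ B, ∑ y, f B y = 1) (B : ι)
    (g : X B → ℝ) :
    ∑ x : ∀ B, X B, (∏ B', f B' (x B')) * g (x B) = ∑ y, f B y * g y := by
  classical
  set F : ∀ B', X B' → ℝ := Function.update f B (fun y => f B y * g y) with hF
  have hpt : ∀ x : ∀ B, X B, (∏ B', f B' (x B')) * g (x B) = ∏ B', F B' (x B') := by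
    intro x
    rw [← Finset.mul_prod_erase Finset.univ (fun B' => f B' (x B')) (Finset.mem_univ B),
        ← Finset.mul_prod_erase Finset.univ (fun B' => F B' (x B')) (Finset.mem_univ B)]
    have h2 : ∀ B' ∈ Finset.univ.erase B, F B' (x B') = f B' (x B') := by
      intro B' hB'
      rw [hF, Function.update_of_ne (Finset.ne_of_mem_erase hB')]
    rw [Finset.prod_congr rfl h2]
    have h3 : F B (x B) = f B (x B) * g (x B) := by
      rw [hF, Function.update_self]
    rw [h3]; ring
  calc ∑ x : ∀ B, X B, (∏ B', f B' (x B')) * g (x B)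
      = ∑ x : ∀ B, X B, ∏ B', F B' (x B') := Finset.sum_congr rfl (fun x _ => hpt x)
    _ = ∏ B', ∑ y, F B' y := (Fintype.prod_sum F).symm
    _ = (∑ y, F B y) * ∏ B' ∈ Finset.univ.erase B, ∑ y, F B' y :=
        (Finset.mul_prod_erase Finset.univ _ (Finset.mem_univ B)).symm
    _ = ∑ y, f B y * g y := by
        have h4 : ∀ B' ∈ Finset.univ.erase B, (∑ y, F B' y) = 1 := by
          intro B' hB'
          rw [hF]
          have : ∀ y, Function.update f B (fun y => f B y * g y) B' y = f B' y := by
            intro y; rw [Function.update_of_ne (Finset.ne_of_mem_erase hB')]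
          simp only [this]; exact h1 B'
        rw [Finset.prod_congr rfl h4, Finset.prod_const_one, mul_one, hF,
          Function.update_self]

/-- corollary of Theorem 1 of the paper:
KL(p ‖ q) ≤ ∑ B, ∑ z, w z * H(pB z B, qB z B) + H(r) - H(p),
where KL(p ‖ q) = H(p, q) - H(p) and r (z, x') = w z * p' z x'. -/
theorem pc_kl_divergence_bound
    {Z ι X' : Type*} [Fintype Z] [Fintype ι] [Fintype X'] [DecidableEq ι]
    (X : ι → Type*) [∀ B, Fintype (X B)]
    (w : Z → ℝ) (hw0 : ∀ z, 0 < w z) (hw1 : ∑ z, w z = 1)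
    (p' : Z → X' → ℝ) (hp'0 : ∀ z x', 0 < p' z x') (hp'1 : ∀ z, ∑ x', p' z x' = 1)
    (pB qB : Z → ∀ B, X B → ℝ)
    (hpB0 : ∀ z B y, 0 < pB z B y) (hpB1 : ∀ z B, ∑ y, pB z B y = 1)
    (hqB0 : ∀ z B y, 0 < qB z B y) (hqB1 : ∀ z B, ∑ y, qB z B y = 1) :
    ((-∑ x' : X', ∑ x : (∀ B, X B),
        (∑ z, w z * p' z x' * ∏ B, pB z B (x B)) *
          Real.log (∑ z, w z * p' z x' * ∏ B, qB z B (x B))) -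
      (-∑ x' : X', ∑ x : (∀ B, X B),
        (∑ z, w z * p' z x' * ∏ B, pB z B (x B)) *
          Real.log (∑ z, w z * p' z x' * ∏ B, pB z B (x B)))) ≤
      ∑ B, ∑ z, w z * (-∑ y, pB z B y * Real.log (qB z B y)) +
        (-∑ z, ∑ x', (w z * p' z x') * Real.log (w z * p' z x')) -
        (-∑ x' : X', ∑ x : (∀ B, X B),
          (∑ z, w z * p' z x' * ∏ B, pB z B (x B)) *
            Real.log (∑ z, w z * p' z x' * ∏ B, pB z B (x B))) := by
  classical
  have hb_pos : ∀ z x' (x : ∀ B, X B), 0 < w z * p' z x' * ∏ B, qB z B (x B) := by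
    intro z x' x
    exact mul_pos (mul_pos (hw0 z) (hp'0 z x')) (Finset.prod_pos (fun B _ => hqB0 z B (x B)))
  have ha_pos : ∀ z x' (x : ∀ B, X B), 0 < w z * p' z x' * ∏ B, pB z B (x B) := by
    intro z x' x
    exact mul_pos (mul_pos (hw0 z) (hp'0 z x')) (Finset.prod_pos (fun B _ => hpB0 z B (x B)))
  -- pointwise log-sum-style bound
  have key1 : ∀ (x' : X') (x : ∀ B, X B),
      ∑ z, (w z * p' z x' * ∏ B, pB z B (x B)) *
          Real.log (w z * p' z x' * ∏ B, qB z B (x B)) ≤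
        (∑ z, w z * p' z x' * ∏ B, pB z B (x B)) *
          Real.log (∑ z, w z * p' z x' * ∏ B, qB z B (x B)) := by
    intro x' x
    rw [Finset.sum_mul]
    refine Finset.sum_le_sum (fun z _ => ?_)
    refine mul_le_mul_of_nonneg_left ?_ (le_of_lt (ha_pos z x' x))
    refine Real.log_le_log (hb_pos z x' x) ?_
    exact Finset.single_le_sum (fun z _ => le_of_lt (hb_pos z x' x)) (Finset.mem_univ z)
  -- exact computation of the inner sum
  have hx_inner : ∀ (z : Z) (x' : X'),
      ∑ x : ∀ B, X B, (w z * p' z x' * ∏ B, pB z B (x B)) *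
          Real.log (w z * p' z x' * ∏ B, qB z B (x B)) =
        w z * p' z x' * Real.log (w z * p' z x') +
          w z * p' z x' * ∑ B, ∑ y, pB z B y * Real.log (qB z B y) := by
    intro z x'
    have hlog : ∀ x : ∀ B, X B,
        Real.log (w z * p' z x' * ∏ B, qB z B (x B)) =
          Real.log (w z * p' z x') + ∑ B, Real.log (qB z B (x B)) := by
      intro x
      rw [Real.log_mul (ne_of_gt (mul_pos (hw0 z) (hp'0 z x')))
          (ne_of_gt (Finset.prod_pos (fun B _ => hqB0 z B (x B)))),
        Real.log_prod]
      intro B _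
      exact ne_of_gt (hqB0 z B (x B))
    have hprodp : ∑ x : ∀ B, X B, ∏ B, pB z B (x B) = 1 := by
      rw [← Fintype.prod_sum]
      simp [hpB1 z]
    calc ∑ x : ∀ B, X B, (w z * p' z x' * ∏ B, pB z B (x B)) *
            Real.log (w z * p' z x' * ∏ B, qB z B (x B))
        = (∑ x : ∀ B, X B, (w z * p' z x' * Real.log (w z * p' z x')) *
              ∏ B, pB z B (x B)) +
            ∑ x : ∀ B, X B, ∑ B, (w z * p' z x') *
              ((∏ B', pB z B' (x B')) * Real.log (qB z B (x B))) := by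
          rw [← Finset.sum_add_distrib]
          refine Finset.sum_congr rfl (fun x _ => ?_)
          rw [hlog x, mul_add, Finset.mul_sum]
          congr 1
          · ring
          · exact Finset.sum_congr rfl (fun B _ => by ring)
      _ = w z * p' z x' * Real.log (w z * p' z x') +
            w z * p' z x' * ∑ B, ∑ y, pB z B y * Real.log (qB z B y) := by
          congr 1
          · rw [← Finset.mul_sum, hprodp, mul_one]
          · rw [Finset.sum_comm]
            rw [Finset.mul_sum]
            refine Finset.sum_congr rfl (fun B _ => ?_)
            rw [← Finset.mul_sum]
            congr 1
            exact aux_sum_pi_prod_mul X (pB z) (hpB1 z) B (fun y => Real.log (qB z B y))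
  -- total identity
  have key2 : ∑ x' : X', ∑ x : ∀ B, X B, ∑ z,
        (w z * p' z x' * ∏ B, pB z B (x B)) *
          Real.log (w z * p' z x' * ∏ B, qB z B (x B)) =
      (∑ z, ∑ x', (w z * p' z x') * Real.log (w z * p' z x')) +
        ∑ B, ∑ z, w z * ∑ y, pB z B y * Real.log (qB z B y) := by
    have swap1 : ∑ x' : X', ∑ x : ∀ B, X B, ∑ z,
          (w z * p' z x' * ∏ B, pB z B (x B)) *
            Real.log (w z * p' z x' * ∏ B, qB z B (x B)) =
        ∑ z, ∑ x' : X', ∑ x : ∀ B, X B,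
          (w z * p' z x' * ∏ B, pB z B (x B)) *
            Real.log (w z * p' z x' * ∏ B, qB z B (x B)) := by
      calc ∑ x' : X', ∑ x : ∀ B, X B, ∑ z,
            (w z * p' z x' * ∏ B, pB z B (x B)) *
              Real.log (w z * p' z x' * ∏ B, qB z B (x B))
          = ∑ x' : X', ∑ z, ∑ x : ∀ B, X B,
            (w z * p' z x' * ∏ B, pB z B (x B)) *
              Real.log (w z * p' z x' * ∏ B, qB z B (x B)) :=
            Finset.sum_congr rfl (fun x' _ => Finset.sum_comm)
        _ = ∑ z, ∑ x' : X', ∑ x : ∀ B, X B,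
            (w z * p' z x' * ∏ B, pB z B (x B)) *
              Real.log (w z * p' z x' * ∏ B, qB z B (x B)) := Finset.sum_comm
    rw [swap1]
    have hz : ∀ z, ∑ x' : X', ∑ x : ∀ B, X B,
          (w z * p' z x' * ∏ B, pB z B (x B)) *
            Real.log (w z * p' z x' * ∏ B, qB z B (x B)) =
        (∑ x', (w z * p' z x') * Real.log (w z * p' z x')) +
          w z * ∑ B, ∑ y, pB z B y * Real.log (qB z B y) := by
      intro z
      rw [Finset.sum_congr rfl (fun x' _ => hx_inner z x'), Finset.sum_add_distrib]
      congr 1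
      have : ∑ x', w z * p' z x' * ∑ B, ∑ y, pB z B y * Real.log (qB z B y) =
          (∑ x', p' z x') * (w z * ∑ B, ∑ y, pB z B y * Real.log (qB z B y)) := by
        rw [Finset.sum_mul]
        exact Finset.sum_congr rfl (fun x' _ => by ring)
      rw [this, hp'1 z, one_mul]
    rw [Finset.sum_congr rfl (fun z _ => hz z), Finset.sum_add_distrib]
    congr 1
    have hms : ∀ z, w z * ∑ B, ∑ y, pB z B y * Real.log (qB z B y) =
        ∑ B, w z * ∑ y, pB z B y * Real.log (qB z B y) :=
      fun z => Finset.mul_sum _ _ _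
    rw [Finset.sum_congr rfl (fun z _ => hms z), Finset.sum_comm]
  -- conclude
  have hstep : ∑ x' : X', ∑ x : ∀ B, X B, ∑ z,
        (w z * p' z x' * ∏ B, pB z B (x B)) *
          Real.log (w z * p' z x' * ∏ B, qB z B (x B)) ≤
      ∑ x' : X', ∑ x : ∀ B, X B,
        (∑ z, w z * p' z x' * ∏ B, pB z B (x B)) *
          Real.log (∑ z, w z * p' z x' * ∏ B, qB z B (x B)) :=
    Finset.sum_le_sum (fun x' _ => Finset.sum_le_sum (fun x _ => key1 x' x))
  have hrhs : ∑ B, ∑ z, w z * (-∑ y, pB z B y * Real.log (qB z B y)) =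
      -∑ B, ∑ z, w z * ∑ y, pB z B y * Real.log (qB z B y) := by
    simp [mul_neg]
  rw [hrhs]
  linarith [hstep, key2]
end
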